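/- The Jacobian determinant of the map G(α,β) = (log(sin(α+β)/sin α), log(sin(α+β)/sin β)) is identically equal to 1 on the open triangle {(α,β) : α > 0, β > 0, α + β < π}. -/

import Mathlib

open Real

lemma sinvar_hasDerivAt (c t : ℝ) (h1 : Real.sin (c + t) ≠ 0) :
    HasDerivAt (fun b => Real.sin (c + b)) (Real.cos (c + t)) t := by
  have := (Real.hasDerivAt_sin (c + t)).comp t ((hasDerivAt_id t).const_add c)
  replace this : HasDerivAt (fun b => Real.sin (c + b)) _ t := this
  simpa using this

lemma logquot_hasDerivAt (c t : ℝ) (h1 : Real.sin (t + c) ≠ 0) (h2 : Real.sin t ≠ 0) :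
    HasDerivAt (fun a => Real.log (Real.sin (a + c) / Real.sin a))
      (Real.cos (t + c) / Real.sin (t + c) - Real.cos t / Real.sin t) t := by
  have hnum : HasDerivAt (fun a => Real.sin (a + c)) (Real.cos (t + c)) t := by
    have := (Real.hasDerivAt_sin (t + c)).comp t ((hasDerivAt_id t).add_const c)
    replace this : HasDerivAt (fun a => Real.sin (a + c)) _ t := this
    simpa using this
  have hq : HasDerivAt (fun a => Real.sin (a + c) / Real.sin a)
      ((Real.cos (t + c) * Real.sin t - Real.sin (t + c) * Real.cos t) / (Real.sin t)^2) t :=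
    hnum.div (Real.hasDerivAt_sin t) h2
  have hne : Real.sin (t + c) / Real.sin t ≠ 0 := div_ne_zero h1 h2
  have := (Real.hasDerivAt_log hne).comp t hq
  replace this : HasDerivAt (fun a => Real.log (Real.sin (a + c) / Real.sin a)) _ t := this
  convert this using 1
  field_simp

lemma logquot_const_hasDerivAt (c d t : ℝ) (h1 : Real.sin (c + t) ≠ 0) (hd : Real.sin d ≠ 0) :
    HasDerivAt (fun b => Real.log (Real.sin (c + b) / Real.sin d))
      (Real.cos (c + t) / Real.sin (c + t)) t := by
  have hq : HasDerivAt (fun b => Real.sin (c + b) / Real.sin d)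
      (Real.cos (c + t) / Real.sin d) t := (sinvar_hasDerivAt c t h1).div_const _
  have hne : Real.sin (c + t) / Real.sin d ≠ 0 := div_ne_zero h1 hd
  have := (Real.hasDerivAt_log hne).comp t hq
  replace this : HasDerivAt (fun b => Real.log (Real.sin (c + b) / Real.sin d)) _ t := this
  convert this using 1
  field_simp

theorem jacobian_G_eq_one (α β : ℝ) (hα : 0 < α) (hβ : 0 < β) (hαβ : α + β < π) :
    (deriv (fun a => Real.log (Real.sin (a + β) / Real.sin a)) α) *
      (deriv (fun b => Real.log (Real.sin (α + b) / Real.sin b)) β) -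
    (deriv (fun b => Real.log (Real.sin (α + b) / Real.sin α)) β) *
      (deriv (fun a => Real.log (Real.sin (a + β) / Real.sin β)) α) = 1 := by
  have hsa : 0 < Real.sin α := Real.sin_pos_of_pos_of_lt_pi hα (by linarith)
  have hsb : 0 < Real.sin β := Real.sin_pos_of_pos_of_lt_pi hβ (by linarith)
  have hsab : 0 < Real.sin (α + β) := Real.sin_pos_of_pos_of_lt_pi (by linarith) hαβ
  have hsa' := hsa.ne'
  have hsb' := hsb.ne'
  have hsab' := hsab.ne'
  have d1 : deriv (fun a => Real.log (Real.sin (a + β) / Real.sin a)) α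
      = Real.cos (α + β) / Real.sin (α + β) - Real.cos α / Real.sin α :=
    (logquot_hasDerivAt β α hsab' hsa').deriv
  have d2 : deriv (fun b => Real.log (Real.sin (α + b) / Real.sin b)) β
      = Real.cos (α + β) / Real.sin (α + β) - Real.cos β / Real.sin β := by
    have h := logquot_hasDerivAt α β (by rwa [add_comm]) hsb'
    have h2 : HasDerivAt (fun b => Real.log (Real.sin (α + b) / Real.sin b))
        (Real.cos (β + α) / Real.sin (β + α) - Real.cos β / Real.sin β) β := by
      convert h using 2 with b
      rw [add_comm]
    rw [h2.deriv, add_comm β α]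
  have d3 : deriv (fun b => Real.log (Real.sin (α + b) / Real.sin α)) β
      = Real.cos (α + β) / Real.sin (α + β) :=
    (logquot_const_hasDerivAt α α β hsab' hsa').deriv
  have d4 : deriv (fun a => Real.log (Real.sin (a + β) / Real.sin β)) α
      = Real.cos (α + β) / Real.sin (α + β) := by
    have h := logquot_const_hasDerivAt β β α (by rwa [add_comm]) hsb'
    have h2 : HasDerivAt (fun a => Real.log (Real.sin (a + β) / Real.sin β))
        (Real.cos (β + α) / Real.sin (β + α)) α := by
      convert h using 2 with a
      rw [add_comm]
    rw [h2.deriv, add_comm β α]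
  rw [d1, d2, d3, d4]
  have hsum : Real.sin (α + β) = Real.sin α * Real.cos β + Real.cos α * Real.sin β :=
    Real.sin_add α β
  field_simp
  linear_combination (Real.cos (α+β) * Real.sin (α+β)) * (Real.sin_add α β)
    - (Real.sin (α+β))^2 * (Real.cos_add α β)
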